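/- For parameters α, β, γ, δ ∈ ℂ, let S_{α,β,γ,δ} : (ℂ³)⁴ → (ℂ³)⁴ be the NLS type parametric 4-simplex map with components (u₁,u₂,u₃,v₁,v₂,v₃,w₁,w₂,w₃,r₁,r₂,r₃), where u₃ = x₃, v₂ = (x₁y₂ + z₂)x₂ + αy₂/x₃, v₃ = y₃, w₂ = x₁y₂ + z₂, w₃ = z₃, r₁ = t₁y₃/x₃, r₂ = t₂x₃/y₃, r₃ = t₃, and u₁, u₂, v₁, w₁ are the rational expressions u₁ = (βx₁ − y₁y₃z₂)z₃/(γy₃), u₂ = [αγ(γx₂x₃ + (z₂ + x₁y₂)x₂x₃z₁z₃ + αy₂z₁z₃)/(αβγ − (x₂x₃(x₁y₂ + z₂) + αy₂)(z₁z₃(βx₁ − y₁y₃z₂) − γy₁y₃))]·(y₃/(x₃z₃)), v₁ = x₃(γy₁y₃ + (y₁y₃z₂ − βx₁)z₁z₃)/(αγy₃), w₁ = [(x₂x₃y₁y₃(γ + z₁z₂z₃) − βz₁z₃(α + x₁x₂x₃))/((x₂x₃(x₁y₂ + z₂) + αy₂)(z₁z₃(βx₁ − y₁y₃z₂) − γy₁y₃)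 − αβγ)]·(γ/z₃). Then at every point where all denominators are nonzero the following hold: (u₁u₂ + α/u₃)(v₁v₂ + β/v₃) = (x₁x₂ + α/x₃)(y₁y₂ + β/y₃), (v₁v₂ + β/v₃)(w₁w₂ + γ/w₃) = (y₁y₂ + β/y₃)(z₁z₂ + γ/z₃), u₃ = x₃, v₃ = y₃, w₃ = z₃ and r₁r₂ = t₁t₂; that is, I₁ = (x₁x₂ + α/x₃)(y₁y₂ + β/y₃), I₂ = (y₁y₂ + β/y₃)(z₁z₂ + γ/z₃), I₃ = x₃, I₄ = y₃, I₅ = z₃ and I₆ = t₁t₂ are invariants of S_{α,β,γ,δ}. Moreover S_{α,β,γ,δ} is noninvolutive: the tenth component of S_{α,β,γ,δ}∘S_{α,β,γ,δ} equals t₁y₃²/x₃², so there exists a point p (with all denominators nonzero) such that S_{α,β,γ,δ}(S_{α,β,γ,δ}(p)) ≠ p. -/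

import Mathlib

noncomputable section

namespace Paper4Simplex

variable {X : Type*}

/-- Quadruples over `X`. -/
abbrev Q (X : Type*) : Type _ := X × X × X × X

/-- 10-tuples over `X`. -/
abbrev P (X : Type*) : Type _ := X × X × X × X × X × X × X × X × X × X

/-- `S` acting on coordinates 1,2,3,4 of a 10-tuple. -/
def app1234 (S : Q X → Q X) : P X → P X := fun p =>
  match p with
  | (a,b,c,d,e,f,g,h,i,j) =>
    match S (a,b,c,d) with
    | (A,B,C,D) => (A,B,C,D,e,f,g,h,i,j)

/-- `S` acting on coordinates 1,5,6,7 of a 10-tuple. -/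
def app1567 (S : Q X → Q X) : P X → P X := fun p =>
  match p with
  | (a,b,c,d,e,f,g,h,i,j) =>
    match S (a,e,f,g) with
    | (A,E,F,G) => (A,b,c,d,E,F,G,h,i,j)

/-- `S` acting on coordinates 2,5,8,9 of a 10-tuple. -/
def app2589 (S : Q X → Q X) : P X → P X := fun p =>
  match p with
  | (a,b,c,d,e,f,g,h,i,j) =>
    match S (b,e,h,i) with
    | (B,E,H,I) => (a,B,c,d,E,f,g,H,I,j)

/-- `S` acting on coordinates 3,6,8,10 of a 10-tuple. -/
def app368X (S : Q X → Q X) : P X → P X := fun p =>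
  match p with
  | (a,b,c,d,e,f,g,h,i,j) =>
    match S (c,f,h,j) with
    | (C,F,H,J) => (a,b,C,d,e,F,g,H,i,J)

/-- `S` acting on coordinates 4,7,9,10 of a 10-tuple. -/
def app479X (S : Q X → Q X) : P X → P X := fun p =>
  match p with
  | (a,b,c,d,e,f,g,h,i,j) =>
    match S (d,g,i,j) with
    | (D,G,I,J) => (a,b,c,D,e,f,G,h,I,J)

def proj1234 : P X → Q X := fun p => match p with
  | (a,b,c,d,_,_,_,_,_,_) => (a,b,c,d)

def proj1567 : P X → Q X := fun p => match p with
  | (a,_,_,_,e,f,g,_,_,_) => (a,e,f,g)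

def proj2589 : P X → Q X := fun p => match p with
  | (_,b,_,_,e,_,_,h,i,_) => (b,e,h,i)

def proj368X : P X → Q X := fun p => match p with
  | (_,_,c,_,_,f,_,h,_,j) => (c,f,h,j)

def proj479X : P X → Q X := fun p => match p with
  | (_,_,_,d,_,_,g,_,i,j) => (d,g,i,j)

/-- Left-hand side of the 4-simplex equation. -/
def lhs (S : Q X → Q X) : P X → P X :=
  app1234 S ∘ app1567 S ∘ app2589 S ∘ app368X S ∘ app479X S

/-- Right-hand side of the 4-simplex equation. -/
def rhs (S : Q X → Q X) : P X → P X :=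
  app479X S ∘ app368X S ∘ app2589 S ∘ app1567 S ∘ app1234 S

/-- All denominators occurring on the left-hand side composition are nonzero:
`D` holds at each quadruple to which `S` is applied. -/
def lhsDom (D : Q X → Prop) (S : Q X → Q X) (p : P X) : Prop :=
  D (proj479X p) ∧
  D (proj368X (app479X S p)) ∧
  D (proj2589 (app368X S (app479X S p))) ∧
  D (proj1567 (app2589 S (app368X S (app479X S p)))) ∧
  D (proj1234 (app1567 S (app2589 S (app368X S (app479X S p)))))

/-- All denominators occurring on the right-hand side composition are nonzero. -/
def rhsDom (D : Q X → Prop) (S : Q X → Q X) (p : P X) : Prop :=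
  D (proj1234 p) ∧
  D (proj1567 (app1234 S p)) ∧
  D (proj2589 (app1567 S (app1234 S p))) ∧
  D (proj368X (app2589 S (app1567 S (app1234 S p)))) ∧
  D (proj479X (app368X S (app2589 S (app1567 S (app1234 S p)))))


/-! The NLS type parametric 4-simplex map. -/

abbrev C3 : Type := ℂ × ℂ × ℂ

/-- The NLS type parametric 4-simplex map S_{α,β,γ,δ}. -/
def Snlsp (α β γ δ : ℂ) : Q C3 → Q C3 := fun q =>
  match q with
  | ((x1,x2,x3),(y1,y2,y3),(z1,z2,z3),(t1,t2,t3)) =>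
    (((β*x1 - y1*y3*z2)*z3/(γ*y3),
      (α*γ*(γ*x2*x3 + (z2 + x1*y2)*x2*x3*z1*z3 + α*y2*z1*z3)
        / (α*β*γ - (x2*x3*(x1*y2 + z2) + α*y2)
            * (z1*z3*(β*x1 - y1*y3*z2) - γ*y1*y3)))
        * (y3/(x3*z3)),
      x3),
     (x3*(γ*y1*y3 + (y1*y3*z2 - β*x1)*z1*z3)/(α*γ*y3),
      (x1*y2 + z2)*x2 + α*y2/x3,
      y3),
     (((x2*x3*y1*y3*(γ + z1*z2*z3) - β*z1*z3*(α + x1*x2*x3))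
        / ((x2*x3*(x1*y2 + z2) + α*y2)
            * (z1*z3*(β*x1 - y1*y3*z2) - γ*y1*y3) - α*β*γ))
        * (γ/z3),
      x1*y2 + z2,
      z3),
     (t1*y3/x3, t2*x3/y3, t3))

/-- Nonvanishing of the denominators of `Snlsp α β γ δ`
(the parameter δ does not occur in any denominator). -/
def DomNLSP (α β γ : ℂ) : Q C3 → Prop := fun q =>
  match q with
  | ((x1,x2,x3),(y1,y2,y3),(z1,z2,z3),_) =>
    α ≠ 0 ∧ γ ≠ 0 ∧ x3 ≠ 0 ∧ y3 ≠ 0 ∧ z3 ≠ 0 ∧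
    α*β*γ - (x2*x3*(x1*y2 + z2) + α*y2)
      * (z1*z3*(β*x1 - y1*y3*z2) - γ*y1*y3) ≠ 0

set_option maxHeartbeats 2000000

/-- For the NLS type parametric 4-simplex map S_{α,β,γ,δ}, writing
S_{α,β,γ,δ}(x₁,x₂,x₃,y₁,y₂,y₃,z₁,z₂,z₃,t₁,t₂,t₃) = (u₁,u₂,u₃,v₁,v₂,v₃,w₁,w₂,w₃,r₁,r₂,r₃),
at every point where all denominators are nonzero one has
(u₁u₂ + α/u₃)(v₁v₂ + β/v₃) = (x₁x₂ + α/x₃)(y₁y₂ + β/y₃),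
(v₁v₂ + β/v₃)(w₁w₂ + γ/w₃) = (y₁y₂ + β/y₃)(z₁z₂ + γ/z₃),
u₃ = x₃, v₃ = y₃, w₃ = z₃ and r₁r₂ = t₁t₂, so that I₁,…,I₆ are invariants.
Moreover S_{α,β,γ,δ} is noninvolutive: there exists a point p, with all denominators
nonzero, such that S_{α,β,γ,δ}(S_{α,β,γ,δ}(p)) ≠ p. -/
theorem Snlsp_invariants_and_noninvolutive (α β γ δ : ℂ) :
    (∀ x1 x2 x3 y1 y2 y3 z1 z2 z3 t1 t2 t3 : ℂ,
      DomNLSP α β γ ((x1,x2,x3),(y1,y2,y3),(z1,z2,z3),(t1,t2,t3)) →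
      match Snlsp α β γ δ ((x1,x2,x3),(y1,y2,y3),(z1,z2,z3),(t1,t2,t3)) with
      | ((u1,u2,u3),(v1,v2,v3),(w1,w2,w3),(r1,r2,_)) =>
        (u1*u2 + α/u3)*(v1*v2 + β/v3) = (x1*x2 + α/x3)*(y1*y2 + β/y3) ∧
        (v1*v2 + β/v3)*(w1*w2 + γ/w3) = (y1*y2 + β/y3)*(z1*z2 + γ/z3) ∧
        u3 = x3 ∧ v3 = y3 ∧ w3 = z3 ∧ r1*r2 = t1*t2) ∧
    (α ≠ 0 → γ ≠ 0 →
      ∃ p : Q C3, DomNLSP α β γ p ∧ DomNLSP α β γ (Snlsp α β γ δ p) ∧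
        Snlsp α β γ δ (Snlsp α β γ δ p) ≠ p) := by
  constructor
  · intro x1 x2 x3 y1 y2 y3 z1 z2 z3 t1 t2 t3 hdom
    simp only [DomNLSP] at hdom
    obtain ⟨ha, hg, hx3, hy3, hz3, hD⟩ := hdom
    obtain ⟨d, hd⟩ : ∃ d : ℂ, d = α*β*γ - (x2*x3*(x1*y2 + z2) + α*y2)
        * (z1*z3*(β*x1 - y1*y3*z2) - γ*y1*y3) := ⟨_, rfl⟩
    rw [← hd] at hD
    simp only [Snlsp]
    refine ⟨?_, ?_, trivial, trivial, trivial, ?_⟩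
    · rw [← hd]
      field_simp
      subst hd
      ring
    · rw [show (x2*x3*(x1*y2 + z2) + α*y2)
          * (z1*z3*(β*x1 - y1*y3*z2) - γ*y1*y3) - α*β*γ = -d from by
        rw [hd]; ring]
      have hd' : -d ≠ 0 := neg_ne_zero.mpr hD
      field_simp
      subst hd
      ring
    · field_simp
  · intro ha hg
    by_cases hb : β = 0
    · subst hb
      refine ⟨((1, 0, 1), (1, 1, 2), (α, 0, γ/α), (1, 1, 1)), ?_, ?_, ?_⟩
      · refine ⟨ha, hg, one_ne_zero, two_ne_zero, div_ne_zero hg ha, ?_⟩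
        rw [show α * 0 * γ - (0 * 1 * (1 * 1 + 0) + α * 1)
              * (α * (γ / α) * (0 * 1 - 1 * 2 * 0) - γ * 1 * 2) = 2*α*γ by
          field_simp; ring]
        exact mul_ne_zero (mul_ne_zero two_ne_zero ha) hg
      · have hS : Snlsp α 0 γ δ ((1, 0, 1), (1, 1, 2), (α, 0, γ/α), (1, 1, 1))
            = ((0, α^2, 1), (1/α, α, 2), (0, 1, γ/α), (2, 1/2, 1)) := by
          simp only [Snlsp, Prod.mk.injEq]
          norm_num
          constructor <;> { field_simp; try ring_nf; try field_simp; try ring }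
        rw [hS]
        refine ⟨ha, hg, one_ne_zero, two_ne_zero, div_ne_zero hg ha, ?_⟩
        rw [show α * 0 * γ - (α ^ 2 * 1 * (0 * α + 1) + α * α)
              * (0 * (γ / α) * (0 * 0 - 1 / α * 2 * 1) - γ * (1 / α) * 2) = 4*α*γ by
          field_simp; ring]
        exact mul_ne_zero (mul_ne_zero (by norm_num) ha) hg
      · intro h
        have h2 := congrArg (fun w : Q C3 => w.2.2.2.1) h
        simp only [Snlsp] at h2
        norm_num at h2
    · refine ⟨((1, 0, 1), (β, 1, 2), (-(α*β)/2, 0, -(2*γ)/(α*β)), (1, 1, 1)), ?_, ?_, ?_⟩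
      · have hz3 : -(2*γ)/(α*β) ≠ 0 :=
          div_ne_zero (neg_ne_zero.2 (mul_ne_zero two_ne_zero hg)) (mul_ne_zero ha hb)
        refine ⟨ha, hg, one_ne_zero, two_ne_zero, hz3, ?_⟩
        rw [show α * β * γ - (0 * 1 * (1 * 1 + 0) + α * 1)
              * (-(α * β) / 2 * (-(2 * γ) / (α * β)) * (β * 1 - β * 2 * 0) - γ * β * 2)
            = 2*α*β*γ by field_simp; ring]
        exact mul_ne_zero (mul_ne_zero (mul_ne_zero two_ne_zero ha) hb) hg
      · have hS : Snlsp α β γ δ ((1, 0, 1), (β, 1, 2), (-(α*β)/2, 0, -(2*γ)/(α*β)), (1, 1, 1))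
            = ((-(1/α), -(α^2)/2, 1), (β/(2*α), α, 2), (-(α*β)/4, 1, -(2*γ)/(α*β)),
               (2, 1/2, 1)) := by
          simp only [Snlsp, Prod.mk.injEq]
          norm_num
          refine ⟨⟨?_,?_⟩,?_,?_⟩ <;> { field_simp; try ring_nf; try field_simp; try ring }
        rw [hS]
        have hz3 : -(2*γ)/(α*β) ≠ 0 :=
          div_ne_zero (neg_ne_zero.2 (mul_ne_zero two_ne_zero hg)) (mul_ne_zero ha hb)
        refine ⟨ha, hg, one_ne_zero, two_ne_zero, hz3, ?_⟩
        rw [show α * β * γ -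
              (-(α ^ 2) / 2 * 1 * (-(1 / α) * α + 1) + α * α) *
                (-(α * β) / 4 * (-(2 * γ) / (α * β)) * (β * -(1 / α) - β / (2 * α) * 2 * 1)
                  - γ * (β / (2 * α)) * 2) = 3*α*β*γ by
          field_simp
          rw [sub_eq_iff_eq_add, eq_comm, add_comm, ← eq_sub_iff_add_eq]
          ring]
        exact mul_ne_zero (mul_ne_zero (mul_ne_zero three_ne_zero ha) hb) hg
      · intro h
        have h2 := congrArg (fun w : Q C3 => w.2.2.2.1) h
        simp only [Snlsp] at h2
        norm_num at h2

end Paper4Simplex
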